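/- Every element of the closure of the commutator subgroup [N₁, N₁] in SL₂(ℤ₃) can be written as the cube A³ of some element A ∈ N₁. -/

import Mathlib

open Matrix MatrixGroups

noncomputable section

/-- The topology on `SL(n, R)` induced from the space of matrices. -/
instance {n : Type*} [DecidableEq n] [Fintype n] {R : Type*} [CommRing R] [TopologicalSpace R] :
    TopologicalSpace (SpecialLinearGroup n R) :=
  inferInstanceAs (TopologicalSpace {A : Matrix n n R // A.det = 1})

/-- `SL(n, R)` is a topological group. -/
instance {n : Type*} [DecidableEq n] [Fintype n] {R : Type*} [CommRing R] [TopologicalSpace R]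
    [IsTopologicalRing R] : IsTopologicalGroup (SpecialLinearGroup n R) where
  continuous_mul := by
    apply continuous_induced_rng.2
    exact (continuous_subtype_val.comp continuous_fst).mul (continuous_subtype_val.comp continuous_snd)
  continuous_inv := by
    have h : Continuous fun A : SpecialLinearGroup n R => ((A : Matrix n n R)).adjugate :=
      Continuous.matrix_adjugate continuous_subtype_val
    have e : (fun A : SpecialLinearGroup n R => ((A⁻¹ : SpecialLinearGroup n R) : Matrix n n R))
        = fun A : SpecialLinearGroup n R => ((A : Matrix n n R)).adjugate := by
      funext A; exact Matrix.SpecialLinearGroup.coe_inv A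
    apply continuous_induced_rng.2
    show Continuous fun A : SpecialLinearGroup n R => ((A⁻¹ : SpecialLinearGroup n R) : Matrix n n R)
    rw [e]; exact h

namespace Stmt10Aux

abbrev Mat := Matrix (Fin 2) (Fin 2) ℤ_[3]

/-- divisibility of all entries by `3^k` -/
def Dk (k : ℕ) (X : Mat) : Prop := ∀ i j, (3 : ℤ_[3]) ^ k ∣ X i j

lemma Dk.mono {k l : ℕ} (h : k ≤ l) {X : Mat} (hX : Dk l X) : Dk k X :=
  fun i j => dvd_trans (pow_dvd_pow _ h) (hX i j)

lemma Dk.add {k : ℕ} {X Y : Mat} (hX : Dk k X) (hY : Dk k Y) : Dk k (X + Y) :=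
  fun i j => by simpa using dvd_add (hX i j) (hY i j)

lemma Dk.neg {k : ℕ} {X : Mat} (hX : Dk k X) : Dk k (-X) :=
  fun i j => by simpa using (hX i j).neg_right

lemma Dk.sub {k : ℕ} {X Y : Mat} (hX : Dk k X) (hY : Dk k Y) : Dk k (X - Y) :=
  fun i j => by simpa using dvd_sub (hX i j) (hY i j)

lemma Dk.mul_right {k : ℕ} {X : Mat} (hX : Dk k X) (Y : Mat) : Dk k (X * Y) := by
  intro i j
  rw [Matrix.mul_apply]
  exact Finset.dvd_sum fun l _ => (hX i l).mul_right _

lemma Dk.mul_left {k : ℕ} {X : Mat} (hX : Dk k X) (Y : Mat) : Dk k (Y * X) := by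
  intro i j
  rw [Matrix.mul_apply]
  exact Finset.dvd_sum fun l _ => (hX l j).mul_left _

lemma Dk.mul {k l : ℕ} {X Y : Mat} (hX : Dk k X) (hY : Dk l Y) : Dk (k + l) (X * Y) := by
  intro i j
  rw [Matrix.mul_apply, pow_add]
  exact Finset.dvd_sum fun m _ => mul_dvd_mul (hX i m) (hY m j)

lemma Dk.three {k : ℕ} {X : Mat} (hX : Dk k X) : Dk (k + 1) (X + X + X) := by
  intro i j
  have : (X + X + X) i j = 3 * X i j := by simp [Matrix.add_apply]; ring
  rw [this, pow_succ, mul_comm ((3:ℤ_[3])^k) 3]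
  exact mul_dvd_mul_left 3 (hX i j)

end Stmt10Aux

namespace Stmt10Aux

lemma cube_approx (m : ℕ) {A C : Mat} (hA : Dk 1 (A - 1)) (hC : Dk (m + 1) (C - 1)) :
    Dk (m + 3) ((C * A) ^ 3 - A ^ 3 -
      ((C - 1) * A ^ 3 + (C - 1) * A ^ 3 + (C - 1) * A ^ 3)) := by
  set a : Mat := A - 1 with ha
  set M : Mat := C - 1 with hM
  set δ : Mat := a * M - M * a with hδ
  have key : (C * A) ^ 3 - A ^ 3 - (M * A ^ 3 + M * A ^ 3 + M * A ^ 3) =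
      (δ * A ^ 2 + δ * A ^ 2 + δ * A ^ 2) + (a * δ - δ * a) * A +
      (M * A * M * A * A + M * A * M * A * A + M * A * M * A * A) +
      (M * A * δ * A + M * A * δ * A) + δ * A * M * A + M * A * M * A * M * A := by
    rw [hδ, hM, ha]
    noncomm_ring
  rw [key]
  have hδd : Dk (m + 2) δ := by
    have h1 : Dk (1 + (m + 1)) (a * M) := hA.mul hC
    have h2 : Dk (m + 1 + 1) (M * a) := hC.mul hA
    rw [show 1 + (m + 1) = m + 2 by ring] at h1
    exact h1.sub h2
  have hMA : Dk (m + 1) (M * A) := hC.mul_right A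
  refine ((((((hδd.mul_right (A^2)).three.add ?_).add ?_).add ?_).add ?_).add ?_)
  · have h1 : Dk (1 + (m + 2)) (a * δ) := hA.mul hδd
    have h2 : Dk (m + 2 + 1) (δ * a) := hδd.mul hA
    rw [show 1 + (m + 2) = m + 2 + 1 by ring] at h1
    exact Dk.mono (by omega) ((h1.sub h2).mul_right A)
  · have h : Dk (m + 1 + (m + 1)) (M * A * (M * A)) := hMA.mul hMA
    have h2 : Dk (m + 1 + (m + 1)) (M * A * M * A * A) := by
      have := h.mul_right A
      rwa [show M * A * (M * A) * A = M * A * M * A * A by noncomm_ring] at this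
    exact Dk.mono (by omega) h2.three
  · have h : Dk (m + 1 + (m + 2)) (M * A * δ) := hMA.mul hδd
    exact Dk.mono (by omega) ((h.mul_right A).add (h.mul_right A))
  · have h : Dk (m + 2 + (m + 1)) (δ * A * (M * A)) := (hδd.mul_right A).mul hMA
    have h2 : Dk (m + 2 + (m + 1)) (δ * A * M * A) := by
      rwa [show δ * A * (M * A) = δ * A * M * A by noncomm_ring] at h
    exact Dk.mono (by omega) h2
  · have h : Dk (m + 1 + (m + 1) + (m + 1)) (M * A * (M * A) * (M * A)) :=
      (hMA.mul hMA).mul hMA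
    have h2 : Dk (m + 1 + (m + 1) + (m + 1)) (M * A * M * A * M * A) := by
      rwa [show M * A * (M * A) * (M * A) = M * A * M * A * M * A by noncomm_ring] at h
    exact Dk.mono (by omega) h2

end Stmt10Aux

namespace Stmt10Aux

lemma three_ne_zero' : (3 : ℤ_[3]) ≠ 0 := by
  intro h
  have h1 : ‖(3 : ℤ_[3])‖ = 0 := by rw [h, norm_zero]
  have h2 : ‖(3 : ℤ_[3])‖ = (3 : ℝ)⁻¹ := by
    have := PadicInt.norm_p (p := 3)
    exact_mod_cast this
  rw [h2] at h1; norm_num at h1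

lemma isUnit_one_add_three (w : ℤ_[3]) : IsUnit (1 + 3 * w) := by
  by_contra h
  rw [PadicInt.not_isUnit_iff, PadicInt.norm_lt_one_iff_dvd] at h
  obtain ⟨c, hc⟩ := h
  have h3 : ((3 : ℕ) : ℤ_[3]) = (3 : ℤ_[3]) := by norm_cast
  rw [h3] at hc
  have : (1 : ℤ_[3]) = 3 * (c - w) := by rw [mul_sub, ← hc]; ring
  have hn : ‖(1 : ℤ_[3])‖ = ‖(3:ℤ_[3])‖ * ‖c - w‖ := by rw [this, norm_mul]
  have h2 : ‖(3 : ℤ_[3])‖ = (3 : ℝ)⁻¹ := by exact_mod_cast PadicInt.norm_p (p := 3)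
  rw [norm_one, h2] at hn
  have hle : ‖c - w‖ ≤ 1 := PadicInt.norm_le_one _
  nlinarith

lemma exists_C (m : ℕ) {W : Mat} (hdet : W.det = 1) (hW : Dk (m + 2) (W - 1)) :
    ∃ C : Mat, C.det = 1 ∧ Dk (m + 1) (C - 1) ∧
      Dk (m + 3) ((C - 1) + (C - 1) + (C - 1) - (W - 1)) := by
  choose Y hY using hW
  set P : ℤ_[3] := (3 : ℤ_[3]) ^ m with hPdef
  have hP2 : (3 : ℤ_[3]) ^ (m + 2) = 9 * P := by rw [pow_succ, pow_succ]; ring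
  have hYW : ∀ i j, W i j - (1 : Mat) i j = 9 * P * Y i j := by
    intro i j
    have := hY i j
    rw [Matrix.sub_apply, hP2] at this
    exact this
  have e00 : W 0 0 = 1 + 9 * P * Y 0 0 := by
    have := hYW 0 0; rw [Matrix.one_apply_eq] at this; linear_combination this
  have e11 : W 1 1 = 1 + 9 * P * Y 1 1 := by
    have := hYW 1 1; rw [Matrix.one_apply_eq] at this; linear_combination this
  have e01 : W 0 1 = 9 * P * Y 0 1 := by
    have := hYW 0 1; rw [Matrix.one_apply_ne (by decide)] at this; linear_combination this
  have e10 : W 1 0 = 9 * P * Y 1 0 := by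
    have := hYW 1 0; rw [Matrix.one_apply_ne (by decide)] at this; linear_combination this
  set dY : ℤ_[3] := Y 0 0 * Y 1 1 - Y 0 1 * Y 1 0 with hdY
  have hTr : Y 0 0 + Y 1 1 = -(9 * P) * dY := by
    have hd : W 0 0 * W 1 1 - W 0 1 * W 1 0 = 1 := by
      rw [← Matrix.det_fin_two]; exact hdet
    rw [e00, e11, e01, e10] at hd
    have h9P : (9 : ℤ_[3]) * P ≠ 0 := by
      apply mul_ne_zero
      · intro h
        have : (9 : ℤ_[3]) = 3 * 3 := by norm_num
        rw [this] at h
        rcases mul_eq_zero.mp h with h' | h' <;> exact three_ne_zero' h'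
      · exact pow_ne_zero _ three_ne_zero'
    have key : 9 * P * ((Y 0 0 + Y 1 1) - (-(9 * P) * dY)) = 0 := by
      rw [hdY]; linear_combination hd
    have := mul_eq_zero.mp key
    rcases this with h | h
    · exact absurd h h9P
    · linear_combination h
  obtain ⟨u, hu⟩ := isUnit_one_add_three (P * Y 1 1)
  have huv : (1 + 3 * P * Y 1 1) * (u⁻¹ : ℤ_[3]ˣ) = 1 := by
    have := u.mul_inv
    rw [hu] at this
    calc (1 + 3 * P * Y 1 1) * (u⁻¹ : ℤ_[3]ˣ)
        = (1 + 3 * (P * Y 1 1)) * (u⁻¹ : ℤ_[3]ˣ) := by ring_nf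
      _ = 1 := this
  set v : ℤ_[3] := ((u⁻¹ : ℤ_[3]ˣ) : ℤ_[3]) with hv
  set z : ℤ_[3] := 2 * P * dY * v with hz
  refine ⟨!![1 + 3 * P * Y 0 0 + 9 * P * z, 3 * P * Y 0 1;
             3 * P * Y 1 0, 1 + 3 * P * Y 1 1], ?_, ?_, ?_⟩
  · rw [Matrix.det_fin_two_of]
    linear_combination (3 * P) * hTr + (18 * P ^ 2 * dY) * huv
  · intro i j
    have hP1 : ∀ x : ℤ_[3], 3 ^ (m + 1) * x = 3 * P * x := by
      intro x; rw [pow_succ]; ring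
    fin_cases i <;> fin_cases j <;> simp [Matrix.sub_apply]
    · exact ⟨Y 0 0 + 3 * z, by rw [hP1]; ring⟩
    · exact ⟨Y 0 1, by rw [hP1]⟩
    · exact ⟨Y 1 0, by rw [hP1]⟩
    · exact ⟨Y 1 1, by rw [hP1]⟩
  · intro i j
    have hP3 : ∀ x : ℤ_[3], 3 ^ (m + 3) * x = 27 * P * x := by
      intro x; rw [pow_succ, pow_succ, pow_succ]; ring
    fin_cases i <;> fin_cases j <;>
      simp only [Matrix.sub_apply, Matrix.add_apply] <;> simp
    · exact ⟨z, by rw [e00, hP3]; ring⟩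
    · exact ⟨0, by rw [e01, hP3]; ring⟩
    · exact ⟨0, by rw [e10, hP3]; ring⟩
    · exact ⟨0, by rw [e11, hP3]; ring⟩

end Stmt10Aux

namespace Stmt10Aux

abbrev G := Matrix.SpecialLinearGroup (Fin 2) ℤ_[3]

lemma step (m : ℕ) (g A : G) (hA : Dk 1 ((A : Mat) - 1))
    (hg : Dk (m + 2) ((g : Mat) - ((A ^ 3 : G) : Mat))) :
    ∃ A' : G, Dk 1 ((A' : Mat) - 1) ∧ Dk (m + 3) ((g : Mat) - ((A' ^ 3 : G) : Mat)) := by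
  set W : G := g * (A ^ 3)⁻¹ with hWdef
  have hWA : (W : Mat) * ((A ^ 3 : G) : Mat) = (g : Mat) := by
    rw [← Matrix.SpecialLinearGroup.coe_mul, hWdef, inv_mul_cancel_right]
  have hW1 : Dk (m + 2) ((W : Mat) - 1) := by
    have h : (W : Mat) - 1 = ((g : Mat) - ((A ^ 3 : G) : Mat)) * (((A ^ 3)⁻¹ : G) : Mat) := by
      have hBB : ((A ^ 3 : G) : Mat) * (((A ^ 3)⁻¹ : G) : Mat) = 1 := by
        rw [← Matrix.SpecialLinearGroup.coe_mul, mul_inv_cancel,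
          Matrix.SpecialLinearGroup.coe_one]
      rw [sub_mul, hBB, hWdef, Matrix.SpecialLinearGroup.coe_mul]
    rw [h]
    exact hg.mul_right _
  obtain ⟨C, hCdet, hC1, hC3⟩ := exists_C m W.2 hW1
  obtain ⟨Cg, hCg⟩ : ∃ Cg : G, (Cg : Mat) = C := ⟨⟨C, hCdet⟩, rfl⟩
  refine ⟨Cg * A, ?_, ?_⟩
  · have hid : ((Cg * A : G) : Mat) - 1 = (C - 1) * (A : Mat) + ((A : Mat) - 1) := by
      rw [Matrix.SpecialLinearGroup.coe_mul, hCg]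
      noncomm_ring
    rw [hid]
    exact ((hC1.mono (by omega)).mul_right _).add hA
  · have hcoe : (((Cg * A) ^ 3 : G) : Mat) = (C * (A : Mat)) ^ 3 := by
      rw [Matrix.SpecialLinearGroup.coe_pow, Matrix.SpecialLinearGroup.coe_mul, hCg]
    have hA3 : ((A ^ 3 : G) : Mat) = ((A : Mat)) ^ 3 := Matrix.SpecialLinearGroup.coe_pow A 3
    have hE1 := cube_approx m hA (hCg ▸ hC1 : Dk (m+1) (C - 1))
    have hE2 := hC3
    rw [hcoe]
    have hWA' : (W : Mat) * ((A : Mat)) ^ 3 = (g : Mat) := by rw [← hA3]; exact hWA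
    have hid2 : (g : Mat) - (C * (A : Mat)) ^ 3 =
        -(((C - 1) + (C - 1) + (C - 1) - ((W : Mat) - 1)) * ((A : Mat)) ^ 3) -
        ((C * (A : Mat)) ^ 3 - ((A : Mat)) ^ 3 -
          ((C - 1) * ((A : Mat)) ^ 3 + (C - 1) * ((A : Mat)) ^ 3 + (C - 1) * ((A : Mat)) ^ 3)) := by
      rw [← hWA']
      noncomm_ring
    rw [hid2]
    exact ((hE2.mul_right _).neg).sub hE1

end Stmt10Aux

namespace Stmt10Aux

lemma exists_approx (g : G) (hg : Dk 2 ((g : Mat) - 1)) (n : ℕ) :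
    ∃ A : G, Dk 1 ((A : Mat) - 1) ∧ Dk n ((g : Mat) - ((A ^ 3 : G) : Mat)) := by
  suffices h : ∀ m : ℕ, ∃ A : G, Dk 1 ((A : Mat) - 1) ∧ Dk (m + 2) ((g : Mat) - ((A ^ 3 : G) : Mat)) by
    obtain ⟨A, h1, h2⟩ := h n
    exact ⟨A, h1, h2.mono (by omega)⟩
  intro m
  induction m with
  | zero =>
    refine ⟨1, ?_, ?_⟩
    · intro i j
      simp [Matrix.SpecialLinearGroup.coe_one]
    · rw [one_pow]
      simpa [Matrix.SpecialLinearGroup.coe_one] using hg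
  | succ k ih =>
    obtain ⟨A, h1, h2⟩ := ih
    obtain ⟨A', h1', h2'⟩ := step k g A h1 h2
    exact ⟨A', h1', h2'⟩

lemma dvd_set_closed (k : ℕ) : IsClosed {x : ℤ_[3] | (3 : ℤ_[3]) ^ k ∣ x} := by
  have heq : {x : ℤ_[3] | (3 : ℤ_[3]) ^ k ∣ x} = {x : ℤ_[3] | ‖x‖ ≤ (3 : ℝ) ^ (-(k : ℤ))} := by
    ext x
    have := PadicInt.norm_le_pow_iff_mem_span_pow (p := 3) x k
    rw [Ideal.mem_span_singleton] at this
    simp only [Set.mem_setOf_eq]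
    rw [show ((3 : ℕ) : ℝ) = (3 : ℝ) from by norm_num] at this
    rw [show ((3 : ℕ) : ℤ_[3]) = (3 : ℤ_[3]) from by norm_num] at this
    exact this.symm
  rw [heq]
  exact isClosed_le continuous_norm continuous_const

lemma cube_of_Dk2 (g : G) (hg : Dk 2 ((g : Mat) - 1)) :
    ∃ A : G, Dk 1 ((A : Mat) - 1) ∧ A ^ 3 = g := by
  classical
  haveI : CompactSpace Mat := inferInstanceAs (CompactSpace (Fin 2 → Fin 2 → ℤ_[3]))
  set S : Set Mat := {X | X.det = 1 ∧ ∀ i j, (3 : ℤ_[3]) ∣ (X - 1) i j} with hS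
  have hSclosed : IsClosed S := by
    have h1 : IsClosed {X : Mat | X.det = 1} :=
      isClosed_singleton.preimage continuous_id.matrix_det
    have h2 : IsClosed {X : Mat | ∀ i j, (3 : ℤ_[3]) ∣ (X - 1) i j} := by
      have : {X : Mat | ∀ i j, (3 : ℤ_[3]) ∣ (X - 1) i j} =
          ⋂ i, ⋂ j, (fun X : Mat => (X - 1) i j) ⁻¹' {x | (3 : ℤ_[3]) ^ 1 ∣ x} := by
        ext X; simp [Set.mem_iInter]
      rw [this]
      refine isClosed_iInter fun i => isClosed_iInter fun j => ?_
      exact (dvd_set_closed 1).preimage ((continuous_id.sub continuous_const).matrix_elem i j)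
    exact h1.inter h2
  have hT : IsClosed ((fun X : Mat => X ^ 3) '' S) :=
    (hSclosed.isCompact.image (continuous_pow 3)).isClosed
  choose B hB1 hB2 using exists_approx g hg
  have hmem : ∀ n : ℕ, ((((B n) ^ 3 : G) : Mat)) ∈ (fun X : Mat => X ^ 3) '' S := by
    intro n
    refine ⟨(B n : Mat), ⟨(B n).2, fun i j => by simpa using hB1 n i j⟩, ?_⟩
    exact (Matrix.SpecialLinearGroup.coe_pow (B n) 3).symm
  have htend : Filter.Tendsto (fun n => (((B n) ^ 3 : G) : Mat)) Filter.atTop (nhds (g : Mat)) := by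
    apply tendsto_pi_nhds.2
    intro i
    apply tendsto_pi_nhds.2
    intro j
    rw [tendsto_iff_dist_tendsto_zero]
    have hbound : ∀ n : ℕ,
        dist ((((B n) ^ 3 : G) : Mat) i j) ((g : Mat) i j) ≤ (3 : ℝ) ^ (-(n : ℤ)) := by
      intro n
      have hd : (3 : ℤ_[3]) ^ n ∣ ((g : Mat) - (((B n) ^ 3 : G) : Mat)) i j := hB2 n i j
      have : ‖((g : Mat) - (((B n) ^ 3 : G) : Mat)) i j‖ ≤ (3 : ℝ) ^ (-(n : ℤ)) := by
        have := (PadicInt.norm_le_pow_iff_mem_span_pow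
          (((g : Mat) - (((B n) ^ 3 : G) : Mat)) i j) n)
        rw [Ideal.mem_span_singleton] at this
        rw [show ((3 : ℕ) : ℝ) = (3 : ℝ) from by norm_num] at this
        rw [show ((3 : ℕ) : ℤ_[3]) = (3 : ℤ_[3]) from by norm_num] at this
        exact this.2 hd
      rw [dist_comm, dist_eq_norm]
      simpa [Matrix.sub_apply] using this
    refine squeeze_zero (fun n => dist_nonneg) hbound ?_
    have : ∀ n : ℕ, (3 : ℝ) ^ (-(n : ℤ)) = ((3 : ℝ)⁻¹) ^ n := by
      intro n
      rw [_root_.zpow_neg, ← _root_.inv_zpow, zpow_natCast]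
    simp only [this]
    exact tendsto_pow_atTop_nhds_zero_of_lt_one (by norm_num) (by norm_num)
  have hgT : (g : Mat) ∈ (fun X : Mat => X ^ 3) '' S :=
    hT.closure_subset (mem_closure_of_tendsto htend (Filter.Eventually.of_forall hmem))
  obtain ⟨X, ⟨hXdet, hX1⟩, hX3⟩ := hgT
  obtain ⟨A, hA⟩ : ∃ A : G, (A : Mat) = X := ⟨⟨X, hXdet⟩, rfl⟩
  refine ⟨A, fun i j => by rw [hA]; simpa using hX1 i j, ?_⟩
  apply Subtype.coe_injective
  show ((A ^ 3 : G) : Mat) = (g : Mat)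
  rw [Matrix.SpecialLinearGroup.coe_pow, hA]
  exact hX3

end Stmt10Aux


open Stmt10Aux

/-- Every element of the closure of the commutator subgroup `[N₁, N₁]` in
`SL₂(ℤ₃)` is the cube `A³` of some element `A ∈ N₁`. -/
theorem stmt_10 (N : ℕ → Subgroup SL(2, ℤ_[3]))
    (hN : ∀ k, ∀ A : SL(2, ℤ_[3]), A ∈ N k ↔
      ∀ i j, (3 : ℤ_[3]) ^ k ∣
        ((A : Matrix (Fin 2) (Fin 2) ℤ_[3]) i j - (1 : Matrix (Fin 2) (Fin 2) ℤ_[3]) i j)) :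
    ∀ g ∈ (⁅N 1, N 1⁆ : Subgroup SL(2, ℤ_[3])).topologicalClosure,
      ∃ A ∈ N 1, A ^ 3 = g := by
  have hbridge : ∀ k, ∀ A : G, A ∈ N k ↔ Dk k ((A : Mat) - 1) := by
    intro k A
    rw [hN]
    constructor
    · intro h i j; simpa [Matrix.sub_apply] using h i j
    · intro h i j; simpa [Matrix.sub_apply] using h i j
  intro g hg
  have hle : ⁅N 1, N 1⁆ ≤ N 2 := by
    rw [Subgroup.commutator_le]
    intro a ha b hb
    rw [hbridge] at ha hb ⊢
    have h2 : ((b : Mat)) * (a : Mat) * ((a⁻¹ : G) : Mat) * ((b⁻¹ : G) : Mat) = 1 := by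
      rw [← Matrix.SpecialLinearGroup.coe_mul, ← Matrix.SpecialLinearGroup.coe_mul,
        ← Matrix.SpecialLinearGroup.coe_mul, show b * a * a⁻¹ * b⁻¹ = (1 : G) by group,
        Matrix.SpecialLinearGroup.coe_one]
    have expand : (((a : Mat) - 1) * ((b : Mat) - 1) - ((b : Mat) - 1) * ((a : Mat) - 1)) *
          (((a⁻¹ : G) : Mat) * ((b⁻¹ : G) : Mat)) =
        ((a : Mat) * (b : Mat) * ((a⁻¹ : G) : Mat) * ((b⁻¹ : G) : Mat)) -
        ((b : Mat) * (a : Mat) * ((a⁻¹ : G) : Mat) * ((b⁻¹ : G) : Mat)) := by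
      noncomm_ring
    have h1 : (open scoped commutatorElement in ((⁅a, b⁆ : G) : Mat)) - 1 =
        (((a : Mat) - 1) * ((b : Mat) - 1) - ((b : Mat) - 1) * ((a : Mat) - 1)) *
          (((a⁻¹ : G) : Mat) * ((b⁻¹ : G) : Mat)) := by
      rw [expand, h2, commutatorElement_def, Matrix.SpecialLinearGroup.coe_mul,
        Matrix.SpecialLinearGroup.coe_mul, Matrix.SpecialLinearGroup.coe_mul]
    rw [h1]
    exact ((ha.mul hb).sub (hb.mul ha)).mul_right _
  have hcont : Continuous fun A : G => (A : Mat) := continuous_subtype_val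
  have hclosed : IsClosed ((N 2 : Subgroup G) : Set G) := by
    have heq : ((N 2 : Subgroup G) : Set G) =
        ⋂ i, ⋂ j, (fun A : G => ((A : Mat) - 1) i j) ⁻¹' {x | (3 : ℤ_[3]) ^ 2 ∣ x} := by
      ext A
      simp only [SetLike.mem_coe, hbridge 2 A, Dk, Set.mem_iInter, Set.mem_preimage,
        Set.mem_setOf_eq]
    rw [heq]
    refine isClosed_iInter fun i => isClosed_iInter fun j => ?_
    exact (dvd_set_closed 2).preimage ((hcont.sub continuous_const).matrix_elem i j)
  have hg2 : g ∈ N 2 := Subgroup.topologicalClosure_minimal _ hle hclosed hg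
  obtain ⟨A, hA1, hA3⟩ := cube_of_Dk2 g ((hbridge 2 g).1 hg2)
  exact ⟨A, (hbridge 1 A).2 hA1, hA3⟩
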